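/- For every natural number ℓ ≥ 2 there exist a finite simple undirected graph G = (V, E) with edge weights w : E → ℤ and an ℓ-th smallest perfect matching M of G such that for every set of edges F ⊆ E with |F| < 2(ℓ − 1), the minimum of w(M') over all perfect matchings M' of G with F ⊆ M' is not equal to w(M). (Hence the bound 2(ℓ − 1) on the number of fixed edges for general graphs is tight.) -/

import Mathlib

variable {V : Type} [Fintype V] [DecidableEq V]

/-- A perfect matching of a graph `G`, viewed as a finite set of edges:
every edge belongs to `G` and every vertex lies in exactly one edge of `M`. -/
def IsPM (G : SimpleGraph V) (M : Finset (Sym2 V)) : Prop :=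
  (∀ e ∈ M, e ∈ G.edgeSet) ∧ ∀ v : V, ∃! e, e ∈ M ∧ v ∈ e

/-- The total weight of a set of edges. -/
def wt (w : Sym2 V → ℤ) (X : Finset (Sym2 V)) : ℤ := ∑ e ∈ X, w e

/-- `NthSmallest G w ℓ M` (for `ℓ ≥ 1`) : `M` is an `ℓ`-th smallest perfect matching of `G`,
defined recursively: `M` is a perfect matching, `M` is not `ℓ'`-th smallest for any
`1 ≤ ℓ' < ℓ`, and `M` has minimum weight among all perfect matchings that are not `ℓ'`-th
smallest for any `1 ≤ ℓ' < ℓ`. -/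
def NthSmallest (G : SimpleGraph V) (w : Sym2 V → ℤ) : ℕ → Finset (Sym2 V) → Prop
  | ℓ, M =>
    IsPM G M ∧
    (∀ ℓ' : ℕ, 1 ≤ ℓ' → ℓ' < ℓ → ¬ NthSmallest G w ℓ' M) ∧
    ∀ M' : Finset (Sym2 V), IsPM G M' →
      (∀ ℓ' : ℕ, 1 ≤ ℓ' → ℓ' < ℓ → ¬ NthSmallest G w ℓ' M') → wt w M ≤ wt w M'
  termination_by ℓ _ => ℓ

open Finset

open scoped Classical in
noncomputable def wset (G : SimpleGraph V) (w : Sym2 V → ℤ) : Finset ℤ :=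
  (Finset.univ.filter (fun M => IsPM G M)).image (wt w)

lemma mem_wset {G : SimpleGraph V} {w : Sym2 V → ℤ} {x : ℤ} :
    x ∈ wset G w ↔ ∃ M, IsPM G M ∧ wt w M = x := by
  classical
  simp [wset]

noncomputable def below (G : SimpleGraph V) (w : Sym2 V → ℤ) (x : ℤ) : ℕ :=
  ((wset G w).filter (fun y => y < x)).card

lemma below_lt {G : SimpleGraph V} {w : Sym2 V → ℤ} {x y : ℤ}
    (hx : x ∈ wset G w) (hxy : x < y) : below G w x < below G w y := by
  apply Finset.card_lt_card
  constructor
  · intro z hz; simp only [Finset.mem_filter] at *; exact ⟨hz.1, lt_trans hz.2 hxy⟩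
  · intro hsub
    have : x ∈ (wset G w).filter (fun z => z < x) := hsub (by simp [hx, hxy])
    simp at this

lemma nth_unfold (G : SimpleGraph V) (w : Sym2 V → ℤ) (ℓ : ℕ) (M : Finset (Sym2 V)) :
    NthSmallest G w ℓ M ↔
      (IsPM G M ∧
      (∀ ℓ' : ℕ, 1 ≤ ℓ' → ℓ' < ℓ → ¬ NthSmallest G w ℓ' M) ∧
      ∀ M' : Finset (Sym2 V), IsPM G M' →
        (∀ ℓ' : ℕ, 1 ≤ ℓ' → ℓ' < ℓ → ¬ NthSmallest G w ℓ' M') → wt w M ≤ wt w M') := by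
  rw [NthSmallest]

lemma nth_char (G : SimpleGraph V) (w : Sym2 V → ℤ) :
    ∀ ℓ : ℕ, 1 ≤ ℓ → ∀ M : Finset (Sym2 V),
      (NthSmallest G w ℓ M ↔ IsPM G M ∧ below G w (wt w M) = ℓ - 1) := by
  intro ℓ
  induction ℓ using Nat.strong_induction_on with
  | _ ℓ IH =>
    intro hℓ M
    have key : ∀ M' : Finset (Sym2 V), IsPM G M' →
        ((∀ ℓ' : ℕ, 1 ≤ ℓ' → ℓ' < ℓ → ¬ NthSmallest G w ℓ' M') ↔ ℓ - 1 ≤ below G w (wt w M')) := by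
      intro M' hPM
      constructor
      · intro h
        by_contra hb
        push_neg at hb
        have h1 : below G w (wt w M') + 1 < ℓ := by omega
        have := h (below G w (wt w M') + 1) (by omega) h1
        rw [IH _ h1 (by omega) M'] at this
        exact this ⟨hPM, by omega⟩
      · intro hb ℓ' h1 h2 hN
        rw [IH _ h2 h1 M'] at hN
        omega
    rw [nth_unfold]
    constructor
    · rintro ⟨hPM, hnot, hmin⟩
      refine ⟨hPM, ?_⟩
      have hge : ℓ - 1 ≤ below G w (wt w M) := (key M hPM).mp hnot
      by_contra hne
      have hgt : ℓ ≤ below G w (wt w M) := by omega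
      -- find a PM with strictly smaller weight but below ≥ ℓ - 1
      set T := (wset G w).filter (fun y => y < wt w M) with hT
      have hTcard : ℓ ≤ T.card := hgt
      have hTne : T.Nonempty := Finset.card_pos.mp (by omega)
      set v := T.max' hTne with hv
      have hvT : v ∈ T := T.max'_mem hTne
      simp only [hT, Finset.mem_filter] at hvT
      obtain ⟨M₀, hM₀, hwM₀⟩ := mem_wset.mp hvT.1
      have hsub : T.erase v ⊆ (wset G w).filter (fun y => y < v) := by
        intro u hu
        have hu1 := Finset.mem_of_mem_erase hu
        have hune := Finset.ne_of_mem_erase hu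
        have hle := T.le_max' u hu1
        simp only [hT, Finset.mem_filter] at hu1 ⊢
        exact ⟨hu1.1, lt_of_le_of_ne hle hune⟩
      have h1 : T.card - 1 ≤ ((wset G w).filter (fun y => y < v)).card := by
        have h2 := Finset.card_le_card hsub
        rwa [Finset.card_erase_of_mem (T.max'_mem hTne)] at h2
      have hcard : ℓ - 1 ≤ below G w v := by
        unfold below
        omega
      rw [← hwM₀] at hcard
      have := hmin M₀ hM₀ ((key M₀ hM₀).mpr hcard)
      rw [hwM₀] at this
      omega
    · rintro ⟨hPM, hb⟩
      refine ⟨hPM, (key M hPM).mpr (by omega), ?_⟩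
      intro M' hPM' hnot'
      have hb' : ℓ - 1 ≤ below G w (wt w M') := (key M' hPM').mp hnot'
      by_contra hlt
      push_neg at hlt
      have hmem : wt w M' ∈ wset G w := mem_wset.mpr ⟨M', hPM', rfl⟩
      have := below_lt hmem hlt
      omega


namespace GBT

abbrev N (m : ℕ) : ℕ := 6 * (m + 1)

def vx (m g a : ℕ) : Fin (N m) := ⟨(6 * g + a) % N m, Nat.mod_lt _ (by show 0 < 6 * (m+1); omega)⟩

lemma vx_val {m g a : ℕ} (hg : g ≤ m) (ha : a < 6) : (vx m g a).val = 6 * g + a :=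
  Nat.mod_eq_of_lt (by show 6 * g + a < 6 * (m+1); omega)

lemma vx_div {m g a : ℕ} (hg : g ≤ m) (ha : a < 6) : (vx m g a).val / 6 = g := by
  rw [vx_val hg ha]; omega

lemma vx_mod {m g a : ℕ} (hg : g ≤ m) (ha : a < 6) : (vx m g a).val % 6 = a := by
  rw [vx_val hg ha]; omega

lemma vx_inj {m g g' a a' : ℕ} (hg : g ≤ m) (hg' : g' ≤ m) (ha : a < 6) (ha' : a' < 6) :
    vx m g a = vx m g' a' ↔ (g = g' ∧ a = a') := by
  rw [Fin.ext_iff, vx_val hg ha, vx_val hg' ha']; omega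

def ladj (a b : ℕ) : Prop :=
  a < 6 ∧ b < 6 ∧
  10 * a + b ∈ ([1, 10, 2, 20, 12, 21, 34, 43, 35, 53, 45, 54, 3, 30, 14, 41, 25, 52] : List ℕ)

instance (a b : ℕ) : Decidable (ladj a b) := by unfold ladj; infer_instance

lemma ladj_iff {a b : ℕ} : ladj a b ↔ a < 6 ∧ b < 6 ∧ (
    10 * a + b = 1 ∨ 10 * a + b = 10 ∨ 10 * a + b = 2 ∨ 10 * a + b = 20 ∨
    10 * a + b = 12 ∨ 10 * a + b = 21 ∨ 10 * a + b = 34 ∨ 10 * a + b = 43 ∨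
    10 * a + b = 35 ∨ 10 * a + b = 53 ∨ 10 * a + b = 45 ∨ 10 * a + b = 54 ∨
    10 * a + b = 3 ∨ 10 * a + b = 30 ∨ 10 * a + b = 14 ∨ 10 * a + b = 41 ∨
    10 * a + b = 25 ∨ 10 * a + b = 52) := by simp [ladj, and_assoc]

lemma ladj_symm {a b : ℕ} (h : ladj a b) : ladj b a := by
  rw [ladj_iff] at *; omega

lemma ladj_lt {a b : ℕ} (h : ladj a b) : a < 6 ∧ b < 6 ∧ a ≠ b := by
  rw [ladj_iff] at h; omega

def G (m : ℕ) : SimpleGraph (Fin (N m)) where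
  Adj u v := u.val / 6 = v.val / 6 ∧ ladj (u.val % 6) (v.val % 6)
  symm := ⟨by rintro u v ⟨h1, h2⟩; exact ⟨h1.symm, ladj_symm h2⟩⟩
  loopless := ⟨by rintro u ⟨h1, h2⟩; exact (ladj_lt h2).2.2 rfl⟩

def wf {m : ℕ} (u v : Fin (N m)) : ℤ :=
  (if u.val / 6 = v.val / 6 ∧ u.val % 6 = 0 ∧ v.val % 6 = 3 then 1 else 0) +
  (if u.val / 6 = v.val / 6 ∧ u.val % 6 = 1 ∧ v.val % 6 = 2 then -1 else 0)

def W (m : ℕ) : Sym2 (Fin (N m)) → ℤ :=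
  Sym2.lift ⟨fun u v => wf u v + wf v u, fun u v => add_comm (wf u v) (wf v u)⟩

def le (m g a b : ℕ) : Sym2 (Fin (N m)) := s(vx m g a, vx m g b)

lemma W_le {m g a b : ℕ} (hg : g ≤ m) (ha : a < 6) (hb : b < 6) :
    W m (le m g a b) =
      (if a = 0 ∧ b = 3 then 1 else 0) + (if a = 1 ∧ b = 2 then -1 else 0) +
      ((if b = 0 ∧ a = 3 then 1 else 0) + (if b = 1 ∧ a = 2 then -1 else 0)) := by
  simp only [W, le, Sym2.lift_mk, wf, vx_div hg ha, vx_div hg hb, vx_mod hg ha, vx_mod hg hb]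
  simp

lemma le_eq_iff {m g g' a b a' b' : ℕ} (hg : g ≤ m) (hg' : g' ≤ m)
    (ha : a < 6) (hb : b < 6) (ha' : a' < 6) (hb' : b' < 6) :
    le m g a b = le m g' a' b' ↔ (g = g' ∧ ((a = a' ∧ b = b') ∨ (a = b' ∧ b = a'))) := by
  rw [le, le, Sym2.eq_iff, vx_inj hg hg' ha ha', vx_inj hg hg' ha hb',
    vx_inj hg hg' hb ha', vx_inj hg hg' hb hb']
  constructor <;> omega

lemma mem_le_iff {m g a b : ℕ} {v : Fin (N m)} :
    v ∈ le m g a b ↔ v = vx m g a ∨ v = vx m g b := Sym2.mem_iff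

lemma le_mem_edgeSet {m g a b : ℕ} (hg : g ≤ m) (h : ladj a b) :
    le m g a b ∈ (G m).edgeSet := by
  obtain ⟨ha, hb, -⟩ := ladj_lt h
  rw [le, SimpleGraph.mem_edgeSet]
  exact ⟨by rw [vx_div hg ha, vx_div hg hb], by rwa [vx_mod hg ha, vx_mod hg hb]⟩



lemma le_swap (m g a b : ℕ) : le m g a b = le m g b a := Sym2.eq_swap

def inB (m g : ℕ) (e : Sym2 (Fin (N m))) : Prop := ∀ v ∈ e, v.val / 6 = g

instance {m g : ℕ} : DecidablePred (inB m g) := fun e => by unfold inB; infer_instance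

def LocalPM (m g : ℕ) (P : Finset (Sym2 (Fin (N m)))) : Prop :=
  (∀ e ∈ P, e ∈ (G m).edgeSet) ∧
  (∀ e ∈ P, inB m g e) ∧
  (∀ v : Fin (N m), v.val / 6 = g → ∃! e, e ∈ P ∧ v ∈ e)

def Rl (m g : ℕ) : Finset (Sym2 (Fin (N m))) := {le m g 0 3, le m g 1 4, le m g 2 5}
def Al (m g : ℕ) : Finset (Sym2 (Fin (N m))) := {le m g 0 1, le m g 2 5, le m g 3 4}
def Bl (m g : ℕ) : Finset (Sym2 (Fin (N m))) := {le m g 0 2, le m g 1 4, le m g 3 5}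
def Cl (m g : ℕ) : Finset (Sym2 (Fin (N m))) := {le m g 1 2, le m g 0 3, le m g 4 5}

lemma localPM_triple {m g : ℕ} (hg : g ≤ m) (a1 b1 a2 b2 a3 b3 : ℕ)
    (h1 : ladj a1 b1) (h2 : ladj a2 b2) (h3 : ladj a3 b3)
    (hperm : ∀ x, x < 6 → (x = a1 ∨ x = b1) ∨ (x = a2 ∨ x = b2) ∨ (x = a3 ∨ x = b3))
    (hdis : (a1 ≠ a2 ∧ a1 ≠ b2 ∧ b1 ≠ a2 ∧ b1 ≠ b2) ∧ (a1 ≠ a3 ∧ a1 ≠ b3 ∧ b1 ≠ a3 ∧ b1 ≠ b3) ∧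
      (a2 ≠ a3 ∧ a2 ≠ b3 ∧ b2 ≠ a3 ∧ b2 ≠ b3)) :
    LocalPM m g {le m g a1 b1, le m g a2 b2, le m g a3 b3} := by
  obtain ⟨c1a, c1b, -⟩ := ladj_lt h1
  obtain ⟨c2a, c2b, -⟩ := ladj_lt h2
  obtain ⟨c3a, c3b, -⟩ := ladj_lt h3
  refine ⟨?_, ?_, ?_⟩
  · intro e he
    simp only [Finset.mem_insert, Finset.mem_singleton] at he
    rcases he with rfl | rfl | rfl
    exacts [le_mem_edgeSet hg h1, le_mem_edgeSet hg h2, le_mem_edgeSet hg h3]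
  · intro e he
    simp only [Finset.mem_insert, Finset.mem_singleton] at he
    intro v hv
    rcases he with rfl | rfl | rfl <;> rw [mem_le_iff] at hv <;>
      rcases hv with rfl | rfl <;> [exact vx_div hg c1a ; exact vx_div hg c1b ;
        exact vx_div hg c2a ; exact vx_div hg c2b ; exact vx_div hg c3a ; exact vx_div hg c3b]
  · intro v hv
    obtain ⟨x, hx6, hvx⟩ : ∃ x, x < 6 ∧ v = vx m g x := by
      refine ⟨v.val % 6, by omega, ?_⟩
      apply Fin.ext; rw [vx_val hg (by omega : v.val % 6 < 6)]; omega
    have hmem : ∀ y z : ℕ, y < 6 → z < 6 → (v ∈ le m g y z ↔ (x = y ∨ x = z)) := by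
      intro y z hy hz
      rw [mem_le_iff, hvx, vx_inj hg hg hx6 hy, vx_inj hg hg hx6 hz]
      constructor <;> intro hh
      · tauto
      · rcases hh with h | h
        exacts [Or.inl ⟨rfl, h⟩, Or.inr ⟨rfl, h⟩]
    rcases hperm x hx6 with h | h | h
    · refine ⟨le m g a1 b1, ⟨by simp, (hmem a1 b1 c1a c1b).mpr h⟩, ?_⟩
      rintro e' ⟨he', hv'⟩
      simp only [Finset.mem_insert, Finset.mem_singleton] at he'
      rcases he' with rfl | rfl | rfl
      · rfl
      · rw [hmem _ _ c2a c2b] at hv'; exact absurd hv' (by omega)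
      · rw [hmem _ _ c3a c3b] at hv'; exact absurd hv' (by omega)
    · refine ⟨le m g a2 b2, ⟨by simp, (hmem a2 b2 c2a c2b).mpr h⟩, ?_⟩
      rintro e' ⟨he', hv'⟩
      simp only [Finset.mem_insert, Finset.mem_singleton] at he'
      rcases he' with rfl | rfl | rfl
      · rw [hmem _ _ c1a c1b] at hv'; exact absurd hv' (by omega)
      · rfl
      · rw [hmem _ _ c3a c3b] at hv'; exact absurd hv' (by omega)
    · refine ⟨le m g a3 b3, ⟨by simp, (hmem a3 b3 c3a c3b).mpr h⟩, ?_⟩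
      rintro e' ⟨he', hv'⟩
      simp only [Finset.mem_insert, Finset.mem_singleton] at he'
      rcases he' with rfl | rfl | rfl
      · rw [hmem _ _ c1a c1b] at hv'; exact absurd hv' (by omega)
      · rw [hmem _ _ c2a c2b] at hv'; exact absurd hv' (by omega)
      · rfl

lemma lj {a b : ℕ} (h : a < 6 ∧ b < 6 ∧ (10*a+b = 1 ∨ 10*a+b = 10 ∨ 10*a+b = 2 ∨ 10*a+b = 20 ∨
    10*a+b = 12 ∨ 10*a+b = 21 ∨ 10*a+b = 34 ∨ 10*a+b = 43 ∨ 10*a+b = 35 ∨ 10*a+b = 53 ∨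
    10*a+b = 45 ∨ 10*a+b = 54 ∨ 10*a+b = 3 ∨ 10*a+b = 30 ∨ 10*a+b = 14 ∨ 10*a+b = 41 ∨
    10*a+b = 25 ∨ 10*a+b = 52)) : ladj a b := ladj_iff.mpr h

lemma localPM_Rl {m g : ℕ} (hg : g ≤ m) : LocalPM m g (Rl m g) :=
  localPM_triple hg 0 3 1 4 2 5 (lj (by omega)) (lj (by omega)) (lj (by omega))
    (by omega) (by omega)
lemma localPM_Al {m g : ℕ} (hg : g ≤ m) : LocalPM m g (Al m g) :=
  localPM_triple hg 0 1 2 5 3 4 (lj (by omega)) (lj (by omega)) (lj (by omega))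
    (by omega) (by omega)
lemma localPM_Bl {m g : ℕ} (hg : g ≤ m) : LocalPM m g (Bl m g) :=
  localPM_triple hg 0 2 1 4 3 5 (lj (by omega)) (lj (by omega)) (lj (by omega))
    (by omega) (by omega)
lemma localPM_Cl {m g : ℕ} (hg : g ≤ m) : LocalPM m g (Cl m g) :=
  localPM_triple hg 1 2 0 3 4 5 (lj (by omega)) (lj (by omega)) (lj (by omega))
    (by omega) (by omega)

lemma le_ne {m g a b a' b' : ℕ} (hg : g ≤ m) (ha : a < 6) (hb : b < 6) (ha' : a' < 6)
    (hb' : b' < 6) (h : ¬((a = a' ∧ b = b') ∨ (a = b' ∧ b = a'))) :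
    le m g a b ≠ le m g a' b' := by
  rw [Ne, le_eq_iff hg hg ha hb ha' hb']; tauto

lemma wt_triple {m : ℕ} (w : Sym2 (Fin (N m)) → ℤ) (e1 e2 e3 : Sym2 (Fin (N m)))
    (h12 : e1 ≠ e2) (h13 : e1 ≠ e3) (h23 : e2 ≠ e3) :
    wt w ({e1, e2, e3} : Finset (Sym2 (Fin (N m)))) = w e1 + w e2 + w e3 := by
  rw [wt, Finset.sum_insert (by simp [h12, h13]), Finset.sum_insert (by simp [h23]),
    Finset.sum_singleton, add_assoc]

lemma wt_Rl {m g : ℕ} (hg : g ≤ m) : wt (W m) (Rl m g) = 1 := by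
  rw [Rl, wt_triple _ _ _ _ (le_ne hg (by omega) (by omega) (by omega) (by omega) (by omega))
    (le_ne hg (by omega) (by omega) (by omega) (by omega) (by omega))
    (le_ne hg (by omega) (by omega) (by omega) (by omega) (by omega)),
    W_le hg (by omega) (by omega), W_le hg (by omega) (by omega), W_le hg (by omega) (by omega)]
  norm_num

lemma wt_Al {m g : ℕ} (hg : g ≤ m) : wt (W m) (Al m g) = 0 := by
  rw [Al, wt_triple _ _ _ _ (le_ne hg (by omega) (by omega) (by omega) (by omega) (by omega))
    (le_ne hg (by omega) (by omega) (by omega) (by omega) (by omega))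
    (le_ne hg (by omega) (by omega) (by omega) (by omega) (by omega)),
    W_le hg (by omega) (by omega), W_le hg (by omega) (by omega), W_le hg (by omega) (by omega)]
  norm_num

lemma wt_Bl {m g : ℕ} (hg : g ≤ m) : wt (W m) (Bl m g) = 0 := by
  rw [Bl, wt_triple _ _ _ _ (le_ne hg (by omega) (by omega) (by omega) (by omega) (by omega))
    (le_ne hg (by omega) (by omega) (by omega) (by omega) (by omega))
    (le_ne hg (by omega) (by omega) (by omega) (by omega) (by omega)),
    W_le hg (by omega) (by omega), W_le hg (by omega) (by omega), W_le hg (by omega) (by omega)]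
  norm_num

lemma wt_Cl {m g : ℕ} (hg : g ≤ m) : wt (W m) (Cl m g) = 0 := by
  rw [Cl, wt_triple _ _ _ _ (le_ne hg (by omega) (by omega) (by omega) (by omega) (by omega))
    (le_ne hg (by omega) (by omega) (by omega) (by omega) (by omega))
    (le_ne hg (by omega) (by omega) (by omega) (by omega) (by omega)),
    W_le hg (by omega) (by omega), W_le hg (by omega) (by omega), W_le hg (by omega) (by omega)]
  norm_num

lemma edge_in_zero {m g a b : ℕ} (h : ladj a b) :
    ∃ P, (P = Al m g ∨ P = Bl m g ∨ P = Cl m g) ∧ le m g a b ∈ P := by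
  rw [ladj_iff] at h
  obtain ⟨ha, hb, hc⟩ := h
  rcases hc with h|h|h|h|h|h|h|h|h|h|h|h|h|h|h|h|h|h <;>
    [ (obtain ⟨rfl, rfl⟩ : a = 0 ∧ b = 1 := by omega);
      (obtain ⟨rfl, rfl⟩ : a = 1 ∧ b = 0 := by omega);
      (obtain ⟨rfl, rfl⟩ : a = 0 ∧ b = 2 := by omega);
      (obtain ⟨rfl, rfl⟩ : a = 2 ∧ b = 0 := by omega);
      (obtain ⟨rfl, rfl⟩ : a = 1 ∧ b = 2 := by omega);
      (obtain ⟨rfl, rfl⟩ : a = 2 ∧ b = 1 := by omega);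
      (obtain ⟨rfl, rfl⟩ : a = 3 ∧ b = 4 := by omega);
      (obtain ⟨rfl, rfl⟩ : a = 4 ∧ b = 3 := by omega);
      (obtain ⟨rfl, rfl⟩ : a = 3 ∧ b = 5 := by omega);
      (obtain ⟨rfl, rfl⟩ : a = 5 ∧ b = 3 := by omega);
      (obtain ⟨rfl, rfl⟩ : a = 4 ∧ b = 5 := by omega);
      (obtain ⟨rfl, rfl⟩ : a = 5 ∧ b = 4 := by omega);
      (obtain ⟨rfl, rfl⟩ : a = 0 ∧ b = 3 := by omega);
      (obtain ⟨rfl, rfl⟩ : a = 3 ∧ b = 0 := by omega);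
      (obtain ⟨rfl, rfl⟩ : a = 1 ∧ b = 4 := by omega);
      (obtain ⟨rfl, rfl⟩ : a = 4 ∧ b = 1 := by omega);
      (obtain ⟨rfl, rfl⟩ : a = 2 ∧ b = 5 := by omega);
      (obtain ⟨rfl, rfl⟩ : a = 5 ∧ b = 2 := by omega)]
  · exact ⟨Al m g, Or.inl rfl, by simp [Al]⟩
  · exact ⟨Al m g, Or.inl rfl, by rw [le_swap]; simp [Al]⟩
  · exact ⟨Bl m g, Or.inr (Or.inl rfl), by simp [Bl]⟩
  · exact ⟨Bl m g, Or.inr (Or.inl rfl), by rw [le_swap]; simp [Bl]⟩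
  · exact ⟨Cl m g, Or.inr (Or.inr rfl), by simp [Cl]⟩
  · exact ⟨Cl m g, Or.inr (Or.inr rfl), by rw [le_swap]; simp [Cl]⟩
  · exact ⟨Al m g, Or.inl rfl, by simp [Al]⟩
  · exact ⟨Al m g, Or.inl rfl, by rw [le_swap]; simp [Al]⟩
  · exact ⟨Bl m g, Or.inr (Or.inl rfl), by simp [Bl]⟩
  · exact ⟨Bl m g, Or.inr (Or.inl rfl), by rw [le_swap]; simp [Bl]⟩
  · exact ⟨Cl m g, Or.inr (Or.inr rfl), by simp [Cl]⟩
  · exact ⟨Cl m g, Or.inr (Or.inr rfl), by rw [le_swap]; simp [Cl]⟩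
  · exact ⟨Cl m g, Or.inr (Or.inr rfl), by simp [Cl]⟩
  · exact ⟨Cl m g, Or.inr (Or.inr rfl), by rw [le_swap]; simp [Cl]⟩
  · exact ⟨Bl m g, Or.inr (Or.inl rfl), by simp [Bl]⟩
  · exact ⟨Bl m g, Or.inr (Or.inl rfl), by rw [le_swap]; simp [Bl]⟩
  · exact ⟨Al m g, Or.inl rfl, by simp [Al]⟩
  · exact ⟨Al m g, Or.inl rfl, by rw [le_swap]; simp [Al]⟩

lemma partner {m : ℕ} {M' : Finset (Sym2 (Fin (N m)))} (h : IsPM (G m) M')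
    {g : ℕ} (hg : g ≤ m) (a : ℕ) (ha : a < 6) :
    ∃ c, ladj a c ∧ s(vx m g a, vx m g c) ∈ M' ∧
      ∀ e ∈ M', vx m g a ∈ e → e = s(vx m g a, vx m g c) := by
  obtain ⟨e, ⟨heM, hve⟩, huniq⟩ := h.2 (vx m g a)
  obtain ⟨b, rfl⟩ := Sym2.mem_iff_exists.mp hve
  have hadj : (G m).Adj (vx m g a) b := (SimpleGraph.mem_edgeSet _).mp (h.1 _ heM)
  obtain ⟨hdiv, hl⟩ := hadj
  have hb6 : b.val % 6 < 6 := by omega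
  have hbg : b.val / 6 = g := by rw [← hdiv, vx_div hg ha]
  have hbeq : b = vx m g (b.val % 6) := Fin.ext (by rw [vx_val hg hb6]; omega)
  rw [vx_mod hg ha] at hl
  refine ⟨b.val % 6, hl, ?_, ?_⟩
  · rw [← hbeq]; exact heM
  · intro e' he' hv'
    rw [← hbeq]
    exact huniq e' ⟨he', hv'⟩

lemma filter_eq {m : ℕ} {M' : Finset (Sym2 (Fin (N m)))} (h : IsPM (G m) M')
    {g : ℕ} (hg : g ≤ m) (P : Finset (Sym2 (Fin (N m))))
    (hPM' : ∀ e ∈ P, e ∈ M') (hPB : ∀ e ∈ P, inB m g e)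
    (hcov : ∀ a, a < 6 → ∃ e ∈ P, vx m g a ∈ e) :
    M'.filter (inB m g) = P := by
  apply Finset.Subset.antisymm
  · intro e he
    rw [Finset.mem_filter] at he
    obtain ⟨heM, hB⟩ := he
    induction e using Sym2.ind with
    | _ u v =>
      have hu : u ∈ s(u, v) := Sym2.mem_mk_left u v
      have hug : u.val / 6 = g := hB u hu
      have ha : u.val % 6 < 6 := by omega
      have hueq : u = vx m g (u.val % 6) := Fin.ext (by rw [vx_val hg ha]; omega)
      obtain ⟨e', he'P, hv'⟩ := hcov _ ha
      rw [← hueq] at hv'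
      obtain ⟨e₀, he₀, huniq⟩ := h.2 u
      have h1 : s(u, v) = e₀ := huniq _ ⟨heM, hu⟩
      have h2 : e' = e₀ := huniq _ ⟨hPM' e' he'P, hv'⟩
      rw [h1, ← h2]
      exact he'P
  · intro e he
    rw [Finset.mem_filter]
    exact ⟨hPM' e he, hPB e he⟩

lemma nbhd0 {c : ℕ} (h : ladj 0 c) : c = 1 ∨ c = 2 ∨ c = 3 := by rw [ladj_iff] at h; omega
lemma nbhd1 {c : ℕ} (h : ladj 1 c) : c = 0 ∨ c = 2 ∨ c = 4 := by rw [ladj_iff] at h; omega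
lemma nbhd2 {c : ℕ} (h : ladj 2 c) : c = 0 ∨ c = 1 ∨ c = 5 := by rw [ladj_iff] at h; omega
lemma nbhd3 {c : ℕ} (h : ladj 3 c) : c = 0 ∨ c = 4 ∨ c = 5 := by rw [ladj_iff] at h; omega
lemma nbhd4 {c : ℕ} (h : ladj 4 c) : c = 1 ∨ c = 3 ∨ c = 5 := by rw [ladj_iff] at h; omega
lemma nbhd5 {c : ℕ} (h : ladj 5 c) : c = 2 ∨ c = 3 ∨ c = 4 := by rw [ladj_iff] at h; omega

lemma invol_cases (c0 c1 c2 c3 c4 c5 : ℕ)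
    (n0 : c0 = 1 ∨ c0 = 2 ∨ c0 = 3) (n1 : c1 = 0 ∨ c1 = 2 ∨ c1 = 4)
    (n2 : c2 = 0 ∨ c2 = 1 ∨ c2 = 5) (n3 : c3 = 0 ∨ c3 = 4 ∨ c3 = 5)
    (n4 : c4 = 1 ∨ c4 = 3 ∨ c4 = 5) (n5 : c5 = 2 ∨ c5 = 3 ∨ c5 = 4)
    (i01 : c0 = 1 → c1 = 0) (i10 : c1 = 0 → c0 = 1)
    (i02 : c0 = 2 → c2 = 0) (i20 : c2 = 0 → c0 = 2)
    (i03 : c0 = 3 → c3 = 0) (i30 : c3 = 0 → c0 = 3)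
    (i12 : c1 = 2 → c2 = 1) (i21 : c2 = 1 → c1 = 2)
    (i14 : c1 = 4 → c4 = 1) (i41 : c4 = 1 → c1 = 4)
    (i25 : c2 = 5 → c5 = 2) (i52 : c5 = 2 → c2 = 5)
    (i34 : c3 = 4 → c4 = 3) (i43 : c4 = 3 → c3 = 4)
    (i35 : c3 = 5 → c5 = 3) (i53 : c5 = 3 → c3 = 5)
    (i45 : c4 = 5 → c5 = 4) (i54 : c5 = 4 → c4 = 5) :
    (c0 = 3 ∧ c1 = 4 ∧ c2 = 5 ∧ c3 = 0 ∧ c4 = 1 ∧ c5 = 2) ∨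
    (c0 = 1 ∧ c1 = 0 ∧ c2 = 5 ∧ c3 = 4 ∧ c4 = 3 ∧ c5 = 2) ∨
    (c0 = 2 ∧ c1 = 4 ∧ c2 = 0 ∧ c3 = 5 ∧ c4 = 1 ∧ c5 = 3) ∨
    (c0 = 3 ∧ c1 = 2 ∧ c2 = 1 ∧ c3 = 0 ∧ c4 = 5 ∧ c5 = 4) := by
  rcases n0 with h0 | h0 | h0
  · have h1 := i01 h0
    rcases n2 with h2 | h2 | h2
    · exact absurd (h0.symm.trans (i20 h2)) (by decide)
    · exact absurd (h1.symm.trans (i21 h2)) (by decide)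
    · have h5 := i25 h2
      rcases n3 with h3 | h3 | h3
      · exact absurd (h0.symm.trans (i30 h3)) (by decide)
      · exact Or.inr (Or.inl ⟨h0, h1, h2, h3, i34 h3, h5⟩)
      · exact absurd (h5.symm.trans (i35 h3)) (by decide)
  · have h2 := i02 h0
    rcases n1 with h1 | h1 | h1
    · exact absurd (h0.symm.trans (i10 h1)) (by decide)
    · exact absurd (h2.symm.trans (i12 h1)) (by decide)
    · have h4 := i14 h1
      rcases n3 with h3 | h3 | h3
      · exact absurd (h0.symm.trans (i30 h3)) (by decide)
      · exact absurd (h4.symm.trans (i34 h3)) (by decide)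
      · exact Or.inr (Or.inr (Or.inl ⟨h0, h1, h2, h3, h4, i35 h3⟩))
  · have h3 := i03 h0
    rcases n1 with h1 | h1 | h1
    · exact absurd (h0.symm.trans (i10 h1)) (by decide)
    · have hc2 := i12 h1
      rcases n4 with h4 | h4 | h4
      · exact absurd (h1.symm.trans (i41 h4)) (by decide)
      · exact absurd (h3.symm.trans (i43 h4)) (by decide)
      · exact Or.inr (Or.inr (Or.inr ⟨h0, h1, hc2, h3, h4, i45 h4⟩))
    · have h4 := i14 h1
      rcases n2 with h2 | h2 | h2
      · exact absurd (h0.symm.trans (i20 h2)) (by decide)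
      · exact absurd (h1.symm.trans (i21 h2)) (by decide)
      · exact Or.inl ⟨h0, h1, h2, h3, h4, i25 h2⟩

set_option maxHeartbeats 1000000 in
lemma classify {m : ℕ} {M' : Finset (Sym2 (Fin (N m)))} (h : IsPM (G m) M')
    {g : ℕ} (hg : g ≤ m) :
    M'.filter (inB m g) = Rl m g ∨ M'.filter (inB m g) = Al m g ∨
      M'.filter (inB m g) = Bl m g ∨ M'.filter (inB m g) = Cl m g := by
  obtain ⟨c0, hl0, hm0, hu0⟩ := partner h hg 0 (by decide)
  obtain ⟨c1, hl1, hm1, hu1⟩ := partner h hg 1 (by decide)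
  obtain ⟨c2, hl2, hm2, hu2⟩ := partner h hg 2 (by decide)
  obtain ⟨c3, hl3, hm3, hu3⟩ := partner h hg 3 (by decide)
  obtain ⟨c4, hl4, hm4, hu4⟩ := partner h hg 4 (by decide)
  obtain ⟨c5, hl5, hm5, hu5⟩ := partner h hg 5 (by decide)
  have hb0 := ladj_lt hl0; have hb1 := ladj_lt hl1; have hb2 := ladj_lt hl2
  have hb3 := ladj_lt hl3; have hb4 := ladj_lt hl4; have hb5 := ladj_lt hl5
  have inv : ∀ a c a' c' : ℕ, a < 6 → c < 6 → a' < 6 → c' < 6 → a ≠ c →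
      s(vx m g a, vx m g c) ∈ M' →
      (∀ e ∈ M', vx m g a' ∈ e → e = s(vx m g a', vx m g c')) →
      (a' = c → c' = a) := by
    intro a c a' c' ha hc ha' hc' hne hmem hpin hac
    subst hac
    have := hpin _ hmem (Sym2.mem_mk_right _ _)
    rw [Sym2.eq_iff, vx_inj hg hg ha hc, vx_inj hg hg ha hc', vx_inj hg hg hc hc'] at this
    omega
  have key := invol_cases c0 c1 c2 c3 c4 c5 (nbhd0 hl0) (nbhd1 hl1) (nbhd2 hl2)
    (nbhd3 hl3) (nbhd4 hl4) (nbhd5 hl5)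
    (fun hh => inv 0 c0 1 c1 (by decide) hb0.2.1 (by decide) hb1.2.1 hb0.2.2 hm0 hu1 hh.symm)
    (fun hh => inv 1 c1 0 c0 (by decide) hb1.2.1 (by decide) hb0.2.1 hb1.2.2 hm1 hu0 hh.symm)
    (fun hh => inv 0 c0 2 c2 (by decide) hb0.2.1 (by decide) hb2.2.1 hb0.2.2 hm0 hu2 hh.symm)
    (fun hh => inv 2 c2 0 c0 (by decide) hb2.2.1 (by decide) hb0.2.1 hb2.2.2 hm2 hu0 hh.symm)
    (fun hh => inv 0 c0 3 c3 (by decide) hb0.2.1 (by decide) hb3.2.1 hb0.2.2 hm0 hu3 hh.symm)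
    (fun hh => inv 3 c3 0 c0 (by decide) hb3.2.1 (by decide) hb0.2.1 hb3.2.2 hm3 hu0 hh.symm)
    (fun hh => inv 1 c1 2 c2 (by decide) hb1.2.1 (by decide) hb2.2.1 hb1.2.2 hm1 hu2 hh.symm)
    (fun hh => inv 2 c2 1 c1 (by decide) hb2.2.1 (by decide) hb1.2.1 hb2.2.2 hm2 hu1 hh.symm)
    (fun hh => inv 1 c1 4 c4 (by decide) hb1.2.1 (by decide) hb4.2.1 hb1.2.2 hm1 hu4 hh.symm)
    (fun hh => inv 4 c4 1 c1 (by decide) hb4.2.1 (by decide) hb1.2.1 hb4.2.2 hm4 hu1 hh.symm)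
    (fun hh => inv 2 c2 5 c5 (by decide) hb2.2.1 (by decide) hb5.2.1 hb2.2.2 hm2 hu5 hh.symm)
    (fun hh => inv 5 c5 2 c2 (by decide) hb5.2.1 (by decide) hb2.2.1 hb5.2.2 hm5 hu2 hh.symm)
    (fun hh => inv 3 c3 4 c4 (by decide) hb3.2.1 (by decide) hb4.2.1 hb3.2.2 hm3 hu4 hh.symm)
    (fun hh => inv 4 c4 3 c3 (by decide) hb4.2.1 (by decide) hb3.2.1 hb4.2.2 hm4 hu3 hh.symm)
    (fun hh => inv 3 c3 5 c5 (by decide) hb3.2.1 (by decide) hb5.2.1 hb3.2.2 hm3 hu5 hh.symm)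
    (fun hh => inv 5 c5 3 c3 (by decide) hb5.2.1 (by decide) hb3.2.1 hb5.2.2 hm5 hu3 hh.symm)
    (fun hh => inv 4 c4 5 c5 (by decide) hb4.2.1 (by decide) hb5.2.1 hb4.2.2 hm4 hu5 hh.symm)
    (fun hh => inv 5 c5 4 c4 (by decide) hb5.2.1 (by decide) hb4.2.1 hb5.2.2 hm5 hu4 hh.symm)
  clear inv hu2 hu3 hu4 hu5 hb0 hb1 hb2 hb3 hb4 hb5 hl0 hl1 hl2 hl3 hl4 hl5 hm5
  rcases key with ⟨e0, e1, e2, e3, e4, e5⟩ | ⟨e0, e1, e2, e3, e4, e5⟩ |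
    ⟨e0, e1, e2, e3, e4, e5⟩ | ⟨e0, e1, e2, e3, e4, e5⟩ <;>
    subst e0 <;> subst e1 <;> subst e2 <;> subst e3 <;> subst e4 <;> subst e5
  · refine Or.inl ?_
    apply filter_eq h hg
    · intro e he
      simp only [Rl, Finset.mem_insert, Finset.mem_singleton] at he
      rcases he with rfl | rfl | rfl
      exacts [hm0, hm1, hm2]
    · exact (localPM_Rl hg).2.1
    · intro a ha
      obtain ⟨e, ⟨heP, hve⟩, -⟩ := (localPM_Rl hg).2.2 (vx m g a) (vx_div hg ha)
      exact ⟨e, heP, hve⟩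
  · refine Or.inr (Or.inl ?_)
    apply filter_eq h hg
    · intro e he
      simp only [Al, Finset.mem_insert, Finset.mem_singleton] at he
      rcases he with rfl | rfl | rfl
      exacts [hm0, hm2, hm3]
    · exact (localPM_Al hg).2.1
    · intro a ha
      obtain ⟨e, ⟨heP, hve⟩, -⟩ := (localPM_Al hg).2.2 (vx m g a) (vx_div hg ha)
      exact ⟨e, heP, hve⟩
  · refine Or.inr (Or.inr (Or.inl ?_))
    apply filter_eq h hg
    · intro e he
      simp only [Bl, Finset.mem_insert, Finset.mem_singleton] at he
      rcases he with rfl | rfl | rfl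
      exacts [hm0, hm1, hm3]
    · exact (localPM_Bl hg).2.1
    · intro a ha
      obtain ⟨e, ⟨heP, hve⟩, -⟩ := (localPM_Bl hg).2.2 (vx m g a) (vx_div hg ha)
      exact ⟨e, heP, hve⟩
  · refine Or.inr (Or.inr (Or.inr ?_))
    apply filter_eq h hg
    · intro e he
      simp only [Cl, Finset.mem_insert, Finset.mem_singleton] at he
      rcases he with rfl | rfl | rfl
      exacts [hm1, hm0, hm4]
    · exact (localPM_Cl hg).2.1
    · intro a ha
      obtain ⟨e, ⟨heP, hve⟩, -⟩ := (localPM_Cl hg).2.2 (vx m g a) (vx_div hg ha)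
      exact ⟨e, heP, hve⟩

lemma blk_le {m : ℕ} (v : Fin (N m)) : v.val / 6 ≤ m := by
  have := v.isLt
  have : v.val < 6 * (m + 1) := this
  omega

lemma edge_block {m : ℕ} {e : Sym2 (Fin (N m))} (he : e ∈ (G m).edgeSet) :
    ∃ g, g ≤ m ∧ inB m g e := by
  induction e using Sym2.ind with
  | _ u v =>
    obtain ⟨hdiv, -⟩ := (SimpleGraph.mem_edgeSet _).mp he
    refine ⟨u.val / 6, blk_le u, ?_⟩
    intro x hx
    rcases Sym2.mem_iff.mp hx with rfl | rfl
    · rfl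
    · exact hdiv.symm

lemma inB_unique {m g g' : ℕ} {e : Sym2 (Fin (N m))} (h1 : inB m g e) (h2 : inB m g' e) :
    g = g' := by
  induction e using Sym2.ind with
  | _ u v => rw [← h1 u (Sym2.mem_mk_left u v), h2 u (Sym2.mem_mk_left u v)]

lemma decomp {m : ℕ} (S : Finset (Sym2 (Fin (N m)))) (hS : ∀ e ∈ S, e ∈ (G m).edgeSet) :
    S = (Finset.range (m + 1)).biUnion (fun g => S.filter (inB m g)) := by
  apply Finset.ext
  intro e
  constructor
  · intro he
    obtain ⟨g, hg, hB⟩ := edge_block (hS e he)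
    exact Finset.mem_biUnion.mpr ⟨g, Finset.mem_range.mpr (by omega), Finset.mem_filter.mpr ⟨he, hB⟩⟩
  · intro he
    obtain ⟨g, -, hg⟩ := Finset.mem_biUnion.mp he
    exact (Finset.mem_filter.mp hg).1

lemma disj_filter {m : ℕ} (S : Finset (Sym2 (Fin (N m)))) :
    Set.PairwiseDisjoint ↑(Finset.range (m + 1)) (fun g => S.filter (inB m g)) := by
  intro a _ b _ hne
  simp only [Function.onFun]
  rw [Finset.disjoint_left]
  intro e he1 he2
  exact hne (inB_unique (Finset.mem_filter.mp he1).2 (Finset.mem_filter.mp he2).2)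

lemma wt_decomp {m : ℕ} (w : Sym2 (Fin (N m)) → ℤ) (S : Finset (Sym2 (Fin (N m))))
    (hS : ∀ e ∈ S, e ∈ (G m).edgeSet) :
    wt w S = ∑ g ∈ Finset.range (m + 1), wt w (S.filter (inB m g)) := by
  conv_lhs => rw [wt, decomp S hS]
  exact Finset.sum_biUnion (disj_filter S)

lemma card_decomp {m : ℕ} (S : Finset (Sym2 (Fin (N m))))
    (hS : ∀ e ∈ S, e ∈ (G m).edgeSet) :
    S.card = ∑ g ∈ Finset.range (m + 1), (S.filter (inB m g)).card := by
  conv_lhs => rw [decomp S hS]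
  exact Finset.card_biUnion (fun a ha b hb hne => disj_filter S ha hb hne)

lemma isPM_assemble {m : ℕ} (c : ℕ → Finset (Sym2 (Fin (N m))))
    (hc : ∀ g, g ≤ m → LocalPM m g (c g)) :
    IsPM (G m) ((Finset.range (m + 1)).biUnion c) := by
  constructor
  · intro e he
    obtain ⟨g, hg, heg⟩ := Finset.mem_biUnion.mp he
    exact (hc g (Nat.lt_succ_iff.mp (Finset.mem_range.mp hg))).1 e heg
  · intro v
    have hgle : v.val / 6 ≤ m := blk_le v
    obtain ⟨e, ⟨heP, hv⟩, uniq⟩ := (hc (v.val / 6) hgle).2.2 v rfl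
    refine ⟨e, ⟨Finset.mem_biUnion.mpr ⟨v.val / 6, Finset.mem_range.mpr (by omega), heP⟩, hv⟩, ?_⟩
    rintro e' ⟨he', hv'⟩
    obtain ⟨g', hg', heg'⟩ := Finset.mem_biUnion.mp he'
    have hB := (hc g' (Nat.lt_succ_iff.mp (Finset.mem_range.mp hg'))).2.1 e' heg'
    have hgg : v.val / 6 = g' := hB v hv'
    refine uniq e' ⟨?_, hv'⟩
    rw [hgg]
    exact heg'

lemma wt_assemble {m : ℕ} (w : Sym2 (Fin (N m)) → ℤ) (c : ℕ → Finset (Sym2 (Fin (N m))))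
    (hc : ∀ g, g ≤ m → LocalPM m g (c g)) :
    wt w ((Finset.range (m + 1)).biUnion c) = ∑ g ∈ Finset.range (m + 1), wt w (c g) := by
  rw [wt]
  apply Finset.sum_biUnion
  intro a ha b hb hne
  simp only [Function.onFun]
  rw [Finset.disjoint_left]
  intro e he1 he2
  have ha' : a ≤ m := Nat.lt_succ_iff.mp (Finset.mem_range.mp ha)
  have hb' : b ≤ m := Nat.lt_succ_iff.mp (Finset.mem_range.mp hb)
  exact hne (inB_unique ((hc a ha').2.1 e he1) ((hc b hb').2.1 e he2))

def MM (m : ℕ) : Finset (Sym2 (Fin (N m))) := (Finset.range (m + 1)).biUnion (fun g => Rl m g)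

lemma isPM_MM (m : ℕ) : IsPM (G m) (MM m) :=
  isPM_assemble _ (fun _ hg => localPM_Rl hg)

lemma wt_MM (m : ℕ) : wt (W m) (MM m) = (m : ℤ) + 1 := by
  rw [MM, wt_assemble _ _ (fun _ hg => localPM_Rl hg)]
  rw [Finset.sum_congr rfl (fun g hg => wt_Rl (Nat.lt_succ_iff.mp (Finset.mem_range.mp hg)))]
  simp

lemma wt_filter_mem {m : ℕ} {M' : Finset (Sym2 (Fin (N m)))} (h : IsPM (G m) M')
    {g : ℕ} (hg : g ≤ m) :
    wt (W m) (M'.filter (inB m g)) = 0 ∨ wt (W m) (M'.filter (inB m g)) = 1 := by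
  rcases classify h hg with hc | hc | hc | hc <;> rw [hc]
  · exact Or.inr (wt_Rl hg)
  · exact Or.inl (wt_Al hg)
  · exact Or.inl (wt_Bl hg)
  · exact Or.inl (wt_Cl hg)

lemma wt_range {m : ℕ} {M' : Finset (Sym2 (Fin (N m)))} (h : IsPM (G m) M') :
    0 ≤ wt (W m) M' ∧ wt (W m) M' ≤ (m : ℤ) + 1 := by
  rw [wt_decomp _ _ h.1]
  constructor
  · apply Finset.sum_nonneg
    intro g hg
    rcases wt_filter_mem h (Nat.lt_succ_iff.mp (Finset.mem_range.mp hg)) with h' | h' <;> rw [h'] <;> norm_num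
  · calc ∑ g ∈ Finset.range (m + 1), wt (W m) (M'.filter (inB m g))
        ≤ ∑ _g ∈ Finset.range (m + 1), (1 : ℤ) := by
          apply Finset.sum_le_sum
          intro g hg
          rcases wt_filter_mem h (Nat.lt_succ_iff.mp (Finset.mem_range.mp hg)) with h' | h' <;> rw [h'] <;> norm_num
      _ = (m : ℤ) + 1 := by simp

lemma achieve {m : ℕ} (j : ℕ) (hj : j ≤ m + 1) :
    ∃ M', IsPM (G m) M' ∧ wt (W m) M' = (j : ℤ) := by
  set c : ℕ → Finset (Sym2 (Fin (N m))) := fun g => if g < j then Rl m g else Al m g with hc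
  have hcl : ∀ g, g ≤ m → LocalPM m g (c g) := by
    intro g hg
    rw [hc]
    dsimp only
    split_ifs
    · exact localPM_Rl hg
    · exact localPM_Al hg
  refine ⟨_, isPM_assemble c hcl, ?_⟩
  rw [wt_assemble _ _ hcl]
  have : ∀ g ∈ Finset.range (m + 1), wt (W m) (c g) = if g < j then (1:ℤ) else 0 := by
    intro g hg
    have hg' : g ≤ m := Nat.lt_succ_iff.mp (Finset.mem_range.mp hg)
    rw [hc]
    dsimp only
    split_ifs
    · exact wt_Rl hg'
    · exact wt_Al hg'
  rw [Finset.sum_congr rfl this, Finset.sum_ite, Finset.sum_const, Finset.sum_const]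
  have : (Finset.range (m + 1)).filter (fun g => g < j) = Finset.range j := by
    ext x
    simp only [Finset.mem_filter, Finset.mem_range]
    omega
  rw [this]
  simp

lemma wset_eq (m : ℕ) : wset (G m) (W m) = Finset.Icc (0 : ℤ) ((m : ℤ) + 1) := by
  ext x
  rw [mem_wset, Finset.mem_Icc]
  constructor
  · rintro ⟨M', hPM, rfl⟩
    exact wt_range hPM
  · rintro ⟨h0, h1⟩
    obtain ⟨M', hPM, hw⟩ := achieve (m := m) x.toNat (by omega)
    exact ⟨M', hPM, by rw [hw]; omega⟩

lemma below_MM (m : ℕ) : below (G m) (W m) (wt (W m) (MM m)) = m + 1 := by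
  rw [below, wset_eq, wt_MM]
  have : (Finset.Icc (0 : ℤ) ((m : ℤ) + 1)).filter (fun y => y < (m : ℤ) + 1) =
      Finset.Icc (0 : ℤ) (m : ℤ) := by
    ext x
    simp only [Finset.mem_filter, Finset.mem_Icc]
    omega
  rw [this, Int.card_Icc]
  omega

lemma edge_repr {m g : ℕ} {e : Sym2 (Fin (N m))} (hg : g ≤ m)
    (he : e ∈ (G m).edgeSet) (hB : inB m g e) :
    ∃ a b, ladj a b ∧ e = le m g a b := by
  induction e using Sym2.ind with
  | _ u v =>
    obtain ⟨hdiv, hl⟩ := (SimpleGraph.mem_edgeSet _).mp he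
    have hu : u.val / 6 = g := hB u (Sym2.mem_mk_left u v)
    have hv : v.val / 6 = g := hB v (Sym2.mem_mk_right u v)
    refine ⟨u.val % 6, v.val % 6, hl, ?_⟩
    have hu' : vx m g (u.val % 6) = u :=
      Fin.ext (by rw [vx_val hg (by omega : u.val % 6 < 6)]; omega)
    have hv' : vx m g (v.val % 6) = v :=
      Fin.ext (by rw [vx_val hg (by omega : v.val % 6 < 6)]; omega)
    rw [le, hu', hv']

lemma tight {m : ℕ} (F : Finset (Sym2 (Fin (N m)))) (hFE : ∀ e ∈ F, e ∈ (G m).edgeSet)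
    (hcard : F.card < 2 * (m + 1)) :
    ¬ IsLeast {k : ℤ | ∃ M' : Finset (Sym2 (Fin (N m))),
        IsPM (G m) M' ∧ F ⊆ M' ∧ wt (W m) M' = k} (wt (W m) (MM m)) := by
  rintro ⟨hmem, hlb⟩
  obtain ⟨M', hPM', hFM', -⟩ := hmem
  -- pigeonhole: some block contains at most one edge of F
  have hpig : ∃ g, g ≤ m ∧ (F.filter (inB m g)).card ≤ 1 := by
    by_contra hall
    push_neg at hall
    have h2 : ∀ g ∈ Finset.range (m + 1), 2 ≤ (F.filter (inB m g)).card :=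
      fun g hg => hall g (Nat.lt_succ_iff.mp (Finset.mem_range.mp hg))
    have hsum : 2 * (m + 1) ≤ F.card := by
      rw [card_decomp F hFE]
      calc 2 * (m + 1) = ∑ _g ∈ Finset.range (m + 1), 2 := by simp [mul_comm]
        _ ≤ ∑ g ∈ Finset.range (m + 1), (F.filter (inB m g)).card := Finset.sum_le_sum h2
    omega
  obtain ⟨g, hg, hFg⟩ := hpig
  -- a weight-0 local matching of block g containing all of F's edges there
  have hP0 : ∃ P0, LocalPM m g P0 ∧ wt (W m) P0 = 0 ∧ F.filter (inB m g) ⊆ P0 := by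
    by_cases hemp : F.filter (inB m g) = ∅
    · exact ⟨Al m g, localPM_Al hg, wt_Al hg, by simp [hemp]⟩
    · obtain ⟨f, hf⟩ := Finset.nonempty_iff_ne_empty.mpr hemp
      have hfF : f ∈ F := (Finset.mem_filter.mp hf).1
      have hfB : inB m g f := (Finset.mem_filter.mp hf).2
      obtain ⟨a, b, hab, rfl⟩ := edge_repr hg (hFE f hfF) hfB
      obtain ⟨P0, hP0set, hfP0⟩ := edge_in_zero (m := m) (g := g) hab
      refine ⟨P0, ?_, ?_, ?_⟩
      · rcases hP0set with rfl | rfl | rfl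
        exacts [localPM_Al hg, localPM_Bl hg, localPM_Cl hg]
      · rcases hP0set with rfl | rfl | rfl
        exacts [wt_Al hg, wt_Bl hg, wt_Cl hg]
      · intro x hx
        have : x = le m g a b := Finset.card_le_one.mp hFg x hx _ hf
        rw [this]
        exact hfP0
  obtain ⟨P0, hP0, hw0, hFP0⟩ := hP0
  set c : ℕ → Finset (Sym2 (Fin (N m))) :=
    fun g' => if g' = g then P0 else M'.filter (inB m g') with hc
  have hcl : ∀ g', g' ≤ m → LocalPM m g' (c g') := by
    intro g' hg'
    rw [hc]
    dsimp only
    split_ifs with h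
    · subst h; exact hP0
    · rcases classify hPM' hg' with h' | h' | h' | h' <;> rw [h']
      exacts [localPM_Rl hg', localPM_Al hg', localPM_Bl hg', localPM_Cl hg']
  have hPM'' := isPM_assemble c hcl
  have hFsub : F ⊆ (Finset.range (m + 1)).biUnion c := by
    intro f hf
    obtain ⟨g', hg', hB⟩ := edge_block (hFE f hf)
    refine Finset.mem_biUnion.mpr ⟨g', Finset.mem_range.mpr (by omega), ?_⟩
    rw [hc]
    dsimp only
    split_ifs with h
    · subst h; exact hFP0 (Finset.mem_filter.mpr ⟨hf, hB⟩)
    · exact Finset.mem_filter.mpr ⟨hFM' hf, hB⟩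
  have hwt : wt (W m) ((Finset.range (m + 1)).biUnion c) ≤ (m : ℤ) := by
    rw [wt_assemble _ _ hcl]
    calc ∑ g' ∈ Finset.range (m + 1), wt (W m) (c g')
        ≤ ∑ g' ∈ Finset.range (m + 1), ((1 : ℤ) - if g' = g then 1 else 0) := by
          apply Finset.sum_le_sum
          intro i hi
          have hi' : i ≤ m := Nat.lt_succ_iff.mp (Finset.mem_range.mp hi)
          rw [hc]
          dsimp only
          split_ifs with h
          · rw [hw0]; norm_num
          · rcases wt_filter_mem hPM' hi' with h' | h' <;> rw [h'] <;> norm_num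
      _ = (m : ℤ) := by
          rw [Finset.sum_sub_distrib, Finset.sum_const,
            Finset.sum_ite_eq' (Finset.range (m + 1)) g (fun _ => (1 : ℤ)),
            if_pos (Finset.mem_range.mpr (by omega))]
          simp
  have hle := hlb ⟨(Finset.range (m + 1)).biUnion c, hPM'', hFsub, rfl⟩
  rw [wt_MM] at hle
  omega

end GBT


/-- **Tightness of the bound `2(ℓ - 1)` for general graphs.** For every `ℓ ≥ 2` there are
a finite graph `G` with integer edge weights `w` and an `ℓ`-th smallest perfect matching
`M` of `G` such that for every set `F` of fewer than `2(ℓ - 1)` edges of `G`, the minimum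
of `w(M')` over perfect matchings `M'` of `G` with `F ⊆ M'` is not `w(M)`. -/
theorem general_bound_tight (ℓ : ℕ) (hℓ : 2 ≤ ℓ) :
    ∃ (n : ℕ) (G : SimpleGraph (Fin n)) (w : Sym2 (Fin n) → ℤ) (M : Finset (Sym2 (Fin n))),
      NthSmallest G w ℓ M ∧
      ∀ F : Finset (Sym2 (Fin n)), (∀ e ∈ F, e ∈ G.edgeSet) → F.card < 2 * (ℓ - 1) →
        ¬ IsLeast {k : ℤ | ∃ M' : Finset (Sym2 (Fin n)), IsPM G M' ∧ F ⊆ M' ∧ wt w M' = k}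
            (wt w M) := by

  set m := ℓ - 2 with hm
  refine ⟨GBT.N m, GBT.G m, GBT.W m, GBT.MM m, ?_, ?_⟩
  · rw [nth_char (GBT.G m) (GBT.W m) ℓ (by omega)]
    refine ⟨GBT.isPM_MM m, ?_⟩
    rw [GBT.below_MM]
    omega
  · intro F hFE hcard
    exact GBT.tight F hFE (by omega)
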